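/- Let m be an odd positive integer, F = GF(2^m), and let a ∈ F be nonzero. Define the weight w_a = #{x ∈ {0,1}^m : x P¹(a) xᵀ ≡ 2 (mod 4)}, where the quadratic form is evaluated in ℤ₄. Then w_a ∈ {2^{m-1} − 2^{(m-1)/2}, 2^{m-1}, 2^{m-1} + 2^{(m-1)/2}}; equivalently, S_a = Σ_{x ∈ {0,1}^m} i^{x P¹(a) xᵀ} satisfies S_a² ∈ {0, 2^{m+1}}. -/

import Mathlib

noncomputable section

namespace DGPaper

/-- The absolute trace `GF(2^m) → 𝔽₂`. -/
def tr {m : ℕ} (x : GaloisField 2 m) : ZMod 2 :=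
  Algebra.trace (ZMod 2) (GaloisField 2 m) x

/-- Lift a bit to `ℤ₄`. -/
def lift2 (v : ZMod 2) : ZMod 4 := (v.val : ZMod 4)

/-- `i^v` for `v ∈ ℤ₄`. -/
def zeta (v : ZMod 4) : ℂ := Complex.I ^ v.val

/-- The field element of `GF(2^m)` associated to a binary `m`-tuple via the basis
`1, ξ, …, ξ^{m-1}`. -/
def fld {m : ℕ} (ξ : GaloisField 2 m) (x : Fin m → ZMod 2) : GaloisField 2 m :=
  ∑ j : Fin m, x j • ξ ^ (j : ℕ)

/-- The binary symmetric matrix `P^t(a)`: for `t = 0` it represents the bilinear form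
`(x,y) ↦ Tr(x y a)`, and for `t ≥ 1` the (zero-diagonal) form
`(x,y) ↦ Tr((x y^{2^t} + x^{2^t} y) a)`, in the basis `1, ξ, …, ξ^{m-1}` of `GF(2^m)`
over `𝔽₂`. -/
def Pmat {m : ℕ} (ξ : GaloisField 2 m) (t : ℕ) (a : GaloisField 2 m) :
    Matrix (Fin m) (Fin m) (ZMod 2) :=
  Matrix.of fun i j =>
    if t = 0 then tr (ξ ^ (i : ℕ) * ξ ^ (j : ℕ) * a)
    else tr ((ξ ^ (i : ℕ) * (ξ ^ (j : ℕ)) ^ (2 ^ t) + (ξ ^ (i : ℕ)) ^ (2 ^ t) * ξ ^ (j : ℕ)) * a)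

/-- The quadratic form `x P xᵀ` evaluated in `ℤ₄` (the `0/1` entries of `P` and `x`
being lifted to `ℤ₄`). -/
def qform {m : ℕ} (P : Matrix (Fin m) (Fin m) (ZMod 2)) (x : Fin m → ZMod 2) : ZMod 4 :=
  ∑ i : Fin m, ∑ j : Fin m, lift2 (x i) * lift2 (P i j) * lift2 (x j)

instance {m : ℕ} : Fintype (GaloisField 2 m) := Fintype.ofFinite _

abbrev π24 : ZMod 4 →+* ZMod 2 := ZMod.castHom (show 2 ∣ 4 by norm_num) (ZMod 2)

lemma lift2_add : ∀ u v : ZMod 2,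
    lift2 (u + v) = lift2 u + lift2 v - 2 * lift2 u * lift2 v := by decide
lemma lift2_zero : lift2 0 = 0 := by decide
lemma lift2_one : lift2 1 = 1 := by decide
lemma pi24_lift2 : ∀ v : ZMod 2, π24 (lift2 v) = v := by decide
lemma two_mul_eq_zero_iff : ∀ v : ZMod 4, 2 * v = 0 ↔ π24 v = 0 := by decide
lemma eq_zero_or_two : ∀ v : ZMod 4, π24 v = 0 → v = 0 ∨ v = 2 := by decide

lemma I_pow_mod (n : ℕ) : Complex.I ^ (n % 4) = Complex.I ^ n := by
  conv_rhs => rw [← Nat.div_add_mod n 4]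
  rw [pow_add, pow_mul, Complex.I_pow_four, one_pow, one_mul]

lemma zeta_add (u v : ZMod 4) : zeta (u + v) = zeta u * zeta v := by
  unfold zeta
  rw [← pow_add, ZMod.val_add, I_pow_mod]

lemma zeta_zero : zeta 0 = 1 := by simp [zeta]
lemma zeta_two : zeta 2 = -1 := by
  show Complex.I ^ (2 : ZMod 4).val = -1
  rw [show (2 : ZMod 4).val = 2 from rfl, Complex.I_sq]

lemma zeta_eq_one_iff (v : ZMod 4) : zeta v = 1 ↔ v = 0 := by
  constructor
  · fin_cases v <;> simp_all [zeta, ZMod.val, Complex.ext_iff] <;> norm_num [pow_succ, Complex.ext_iff] <;> rfl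
  · rintro rfl; exact zeta_zero

lemma sum_swap_eq_zero {n : ℕ} {M : Type*} [AddCommMonoid M] (f : Fin n → Fin n → M)
    (hsym : ∀ i j, f i j + f j i = 0) (hdiag : ∀ i, f i i = 0) :
    ∑ i, ∑ j, f i j = 0 := by
  rw [← Finset.sum_product']
  refine Finset.sum_ninvolution Prod.swap (fun p => hsym p.1 p.2) (fun p h hc => ?_)
    (fun p => Finset.mem_univ _) (fun p => Prod.swap_swap p)
  have hp : p.2 = p.1 := by
    have := congrArg Prod.fst hc; simpa [Prod.swap] using this
  apply h
  rw [← hp]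
  exact hdiag p.2



variable {m : ℕ} (P : Matrix (Fin m) (Fin m) (ZMod 2))

def bform (x z : Fin m → ZMod 2) : ZMod 4 :=
  ∑ i : Fin m, ∑ j : Fin m, lift2 (x i) * lift2 (P i j) * lift2 (z j)

lemma pi24_qform (x : Fin m → ZMod 2) :
    π24 (qform P x) = ∑ i, ∑ j, x i * P i j * x j := by
  unfold qform
  rw [map_sum]
  refine Finset.sum_congr rfl fun i _ => ?_
  rw [map_sum]
  exact Finset.sum_congr rfl fun j _ => by rw [map_mul, map_mul, pi24_lift2, pi24_lift2, pi24_lift2]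

lemma qform_zero_or_two (hs : P.IsSymm) (hd : ∀ i, P i i = 0)
    (x : Fin m → ZMod 2) : qform P x = 0 ∨ qform P x = 2 := by
  apply eq_zero_or_two
  rw [pi24_qform]
  apply sum_swap_eq_zero
  · intro i j
    rw [hs.apply i j]
    have h2 : x i * P i j * x j + x j * P i j * x i = 2 * (x i * P i j * x j) := by ring
    rw [h2]
    exact mul_eq_zero_of_left (CharTwo.two_eq_zero (R := ZMod 2)) _
  · intro i; rw [hd i]; ring

lemma key5 : ∀ u v p u' v' : ZMod 2,
    (lift2 (u + v) * lift2 p * lift2 (u' + v') - lift2 u * lift2 p * lift2 u'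
      - lift2 v * lift2 p * lift2 v' - 2 * (lift2 u * lift2 p * lift2 v'))
    + (lift2 (u' + v') * lift2 p * lift2 (u + v) - lift2 u' * lift2 p * lift2 u
      - lift2 v' * lift2 p * lift2 v - 2 * (lift2 u' * lift2 p * lift2 v)) = 0 := by decide

lemma polarization (hs : P.IsSymm) (hd : ∀ i, P i i = 0) (x z : Fin m → ZMod 2) :
    qform P (x + z) = qform P x + qform P z + 2 * bform P x z := by
  have h0 : ∑ i, ∑ j, (lift2 ((x + z) i) * lift2 (P i j) * lift2 ((x + z) j)
      - lift2 (x i) * lift2 (P i j) * lift2 (x j)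
      - lift2 (z i) * lift2 (P i j) * lift2 (z j)
      - 2 * (lift2 (x i) * lift2 (P i j) * lift2 (z j))) = 0 := by
    apply sum_swap_eq_zero
    · intro i j
      rw [hs.apply i j]
      simp only [Pi.add_apply]
      exact key5 (x i) (z i) (P i j) (x j) (z j)
    · intro i
      simp only [hd i, lift2_zero]
      ring
  have hsplit : ∀ i j : Fin m, lift2 ((x + z) i) * lift2 (P i j) * lift2 ((x + z) j)
      = (lift2 ((x + z) i) * lift2 (P i j) * lift2 ((x + z) j)
        - lift2 (x i) * lift2 (P i j) * lift2 (x j)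
        - lift2 (z i) * lift2 (P i j) * lift2 (z j)
        - 2 * (lift2 (x i) * lift2 (P i j) * lift2 (z j)))
        + (lift2 (x i) * lift2 (P i j) * lift2 (x j)
          + lift2 (z i) * lift2 (P i j) * lift2 (z j)
          + 2 * (lift2 (x i) * lift2 (P i j) * lift2 (z j))) := fun i j => by ring
  show (∑ i, ∑ j, lift2 ((x + z) i) * lift2 (P i j) * lift2 ((x + z) j)) = _
  calc (∑ i, ∑ j, lift2 ((x + z) i) * lift2 (P i j) * lift2 ((x + z) j))
      = ∑ i, ∑ j, ((lift2 ((x + z) i) * lift2 (P i j) * lift2 ((x + z) j)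
        - lift2 (x i) * lift2 (P i j) * lift2 (x j)
        - lift2 (z i) * lift2 (P i j) * lift2 (z j)
        - 2 * (lift2 (x i) * lift2 (P i j) * lift2 (z j)))
        + (lift2 (x i) * lift2 (P i j) * lift2 (x j)
          + lift2 (z i) * lift2 (P i j) * lift2 (z j)
          + 2 * (lift2 (x i) * lift2 (P i j) * lift2 (z j)))) :=
        Finset.sum_congr rfl fun i _ => Finset.sum_congr rfl fun j _ => hsplit i j
    _ = _ := by
        simp only [Finset.sum_add_distrib, ← Finset.mul_sum]
        rw [h0, zero_add]
        unfold qform bform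
        ring


-- chunk 3
def cvec (z : Fin m → ZMod 2) (i : Fin m) : ZMod 4 :=
  ∑ j, lift2 (P i j) * lift2 (z j)

lemma bform_eq (x z : Fin m → ZMod 2) :
    bform P x z = ∑ i, lift2 (x i) * cvec P z i := by
  unfold bform cvec
  exact Finset.sum_congr rfl fun i _ => by
    rw [Finset.mul_sum]
    exact Finset.sum_congr rfl fun j _ => by ring

lemma pi24_cvec (z : Fin m → ZMod 2) (i : Fin m) :
    π24 (cvec P z i) = ∑ j, P i j * z j := by
  unfold cvec
  rw [map_sum]
  exact Finset.sum_congr rfl fun j _ => by rw [map_mul, pi24_lift2, pi24_lift2]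

lemma bform_single (z : Fin m → ZMod 2) (i : Fin m) :
    bform P (Pi.single i 1) z = cvec P z i := by
  rw [bform_eq]
  rw [Finset.sum_eq_single i]
  · rw [Pi.single_eq_same, lift2_one, one_mul]
  · intro b _ hb
    rw [Pi.single_eq_of_ne hb, lift2_zero, zero_mul]
  · intro h; exact absurd (Finset.mem_univ i) h

lemma two_bform_eq_zero_iff (z : Fin m → ZMod 2) :
    (∀ x, 2 * bform P x z = 0) ↔ (∀ i, ∑ j, P i j * z j = 0) := by
  constructor
  · intro h i
    have h' := h (Pi.single i 1)
    rw [bform_single] at h'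
    have := (two_mul_eq_zero_iff _).mp h'
    rwa [pi24_cvec] at this
  · intro h x
    rw [bform_eq, Finset.mul_sum]
    refine Finset.sum_eq_zero fun i _ => ?_
    have h2 : 2 * cvec P z i = 0 := (two_mul_eq_zero_iff _).mpr (by rw [pi24_cvec]; exact h i)
    calc 2 * (lift2 (x i) * cvec P z i) = lift2 (x i) * (2 * cvec P z i) := by ring
    _ = 0 := by rw [h2, mul_zero]

/-- the additive character `x ↦ i^{2 b(x,z)}`. -/
def chi (z : Fin m → ZMod 2) : AddChar (Fin m → ZMod 2) ℂ where
  toFun x := zeta (2 * bform P x z)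
  map_zero_eq_one' := by
    show zeta (2 * bform P 0 z) = 1
    have : bform P 0 z = 0 := by
      unfold bform
      refine Finset.sum_eq_zero fun i _ => Finset.sum_eq_zero fun j _ => ?_
      simp [lift2_zero]
    rw [this, mul_zero, zeta_zero]
  map_add_eq_mul' := by
    intro x y
    have key : ∀ u v p w : ZMod 2, 2 * (lift2 (u + v) * lift2 p * lift2 w)
        = 2 * (lift2 u * lift2 p * lift2 w) + 2 * (lift2 v * lift2 p * lift2 w) := by decide
    have hb : 2 * bform P (x + y) z = 2 * bform P x z + 2 * bform P y z := by
      unfold bform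
      simp only [Finset.mul_sum]
      rw [← Finset.sum_add_distrib]
      refine Finset.sum_congr rfl fun i _ => ?_
      rw [← Finset.sum_add_distrib]
      exact Finset.sum_congr rfl fun j _ => key (x i) (y i) (P i j) (z j)
    show zeta (2 * bform P (x + y) z) = zeta (2 * bform P x z) * zeta (2 * bform P y z)
    rw [hb, zeta_add]

lemma sum_chi (z : Fin m → ZMod 2) :
    ∑ x, zeta (2 * bform P x z)
      = if (∀ i, ∑ j, P i j * z j = 0) then ((2 : ℂ) ^ m) else 0 := by
  classical
  have h1 : ∑ x, zeta (2 * bform P x z) = ∑ x, chi P z x := rfl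
  rw [h1, AddChar.sum_eq_ite]
  have hcard : (Fintype.card (Fin m → ZMod 2) : ℂ) = 2 ^ m := by
    rw [Fintype.card_fun]
    simp
  have hiff : chi P z = 0 ↔ (∀ i, ∑ j, P i j * z j = 0) := by
    rw [AddChar.eq_zero_iff]
    constructor
    · intro h
      refine (two_bform_eq_zero_iff P z).mp (fun x => ?_) 
      exact (zeta_eq_one_iff _).mp (h x)
    · intro h x
      show zeta (2 * bform P x z) = 1
      rw [(two_bform_eq_zero_iff P z).mpr h x, zeta_zero]
  split_ifs with h1 h2 h2
  · exact hcard
  · exact absurd (hiff.mp h1) h2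
  · exact absurd (hiff.mpr h2) h1
  · rfl

lemma zeta_sq (v : ZMod 4) (h : v = 0 ∨ v = 2) : zeta v * zeta v = 1 := by
  rcases h with rfl | rfl
  · rw [zeta_zero]; ring
  · rw [zeta_two]; ring

lemma Ssq (hs : P.IsSymm) (hd : ∀ i, P i i = 0) :
    (∑ x, zeta (qform P x)) ^ 2
      = 2 ^ m * ∑ z ∈ Finset.univ.filter
          (fun z : Fin m → ZMod 2 => ∀ i, ∑ j, P i j * z j = 0), zeta (qform P z) := by
  classical
  rw [sq, Finset.sum_mul_sum]
  have step1 : ∀ x : Fin m → ZMod 2,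
      ∑ y, zeta (qform P x) * zeta (qform P y)
        = ∑ z, zeta (qform P z) * zeta (2 * bform P x z) := by
    intro x
    rw [← Fintype.sum_equiv (Equiv.addLeft x)
      (fun z => zeta (qform P x) * zeta (qform P (x + z)))
      (fun y => zeta (qform P x) * zeta (qform P y)) (fun z => rfl)]
    refine Finset.sum_congr rfl fun z _ => ?_
    rw [polarization P hs hd x z, zeta_add, zeta_add]
    have := zeta_sq (qform P x) (qform_zero_or_two P hs hd x)
    calc zeta (qform P x) * (zeta (qform P x) * zeta (qform P z) * zeta (2 * bform P x z))
        = (zeta (qform P x) * zeta (qform P x)) * (zeta (qform P z) * zeta (2 * bform P x z)) := by ring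
      _ = zeta (qform P z) * zeta (2 * bform P x z) := by rw [this, one_mul]
  calc ∑ x, ∑ y, zeta (qform P x) * zeta (qform P y)
      = ∑ x, ∑ z, zeta (qform P z) * zeta (2 * bform P x z) :=
        Finset.sum_congr rfl fun x _ => step1 x
    _ = ∑ z, ∑ x, zeta (qform P z) * zeta (2 * bform P x z) := Finset.sum_comm
    _ = ∑ z, zeta (qform P z) * ∑ x, zeta (2 * bform P x z) :=
        Finset.sum_congr rfl fun z _ => by rw [Finset.mul_sum]
    _ = ∑ z, zeta (qform P z) * (if (∀ i, ∑ j, P i j * z j = 0) then ((2:ℂ)^m) else 0) :=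
        Finset.sum_congr rfl fun z _ => by rw [sum_chi]
    _ = ∑ z, (if (∀ i, ∑ j, P i j * z j = 0) then (2:ℂ)^m * zeta (qform P z) else 0) :=
        Finset.sum_congr rfl fun z _ => by split_ifs <;> ring
    _ = 2 ^ m * ∑ z, (if (∀ i, ∑ j, P i j * z j = 0) then zeta (qform P z) else 0) := by
        rw [Finset.mul_sum]
        exact Finset.sum_congr rfl fun z _ => by split_ifs <;> ring
    _ = _ := by rw [Finset.sum_filter]


abbrev F' (m : ℕ) := GaloisField 2 m

def frobAlg : F' m ≃ₐ[ZMod 2] F' m :=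
  AlgEquiv.ofBijective
    { toRingHom := frobenius (F' m) 2,
      commutes' := fun c => by
        show (algebraMap (ZMod 2) (F' m) c) ^ 2 = algebraMap (ZMod 2) (F' m) c
        rw [← map_pow]
        congr 1
        revert c; decide }
    ((Finite.injective_iff_bijective).mp (frobenius (F' m) 2).injective)

lemma frobAlg_apply (x : F' m) : frobAlg x = x ^ 2 := rfl

lemma tr_sq (x : F' m) : tr (x ^ 2) = tr x := by
  have := Algebra.trace_eq_of_algEquiv (frobAlg (m := m)) x
  rw [frobAlg_apply] at this
  exact this

lemma tr_nondeg {u : GaloisField 2 m} (h : ∀ x, tr (u * x) = 0) : u = 0 := by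
  have hnd := traceForm_nondegenerate (ZMod 2) (GaloisField 2 m)
  exact hnd.1 u (fun v => by simpa [Algebra.traceForm_apply, tr] using h v)

lemma sqrt_exists (u : GaloisField 2 m) : ∃ e, e ^ 2 = u := by
  obtain ⟨e, he⟩ := (frobAlg (m := m)).surjective u
  exact ⟨e, he⟩


section Main
variable {m : ℕ} (hm : Odd m) (ξ : GaloisField 2 m)
  (hξ : LinearIndependent (ZMod 2) fun j : Fin m => ξ ^ (j : ℕ))
  (a : GaloisField 2 m) (ha : a ≠ 0)

lemma Pmat1_apply (i j : Fin m) :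
    Pmat ξ 1 a i j
      = tr ((ξ ^ (i : ℕ) * (ξ ^ (j : ℕ)) ^ 2 + (ξ ^ (i : ℕ)) ^ 2 * ξ ^ (j : ℕ)) * a) := by
  simp [Pmat]

lemma Pmat1_symm : (Pmat ξ 1 a).IsSymm := by
  apply Matrix.IsSymm.ext
  intro i j
  rw [Pmat1_apply, Pmat1_apply]
  congr 2
  ring

lemma Pmat1_diag (i : Fin m) : Pmat ξ 1 a i i = 0 := by
  rw [Pmat1_apply]
  rw [show ξ ^ (i:ℕ) * (ξ ^ (i:ℕ)) ^ 2 + (ξ ^ (i:ℕ)) ^ 2 * ξ ^ (i:ℕ) = 0 by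
    rw [mul_comm]; exact CharTwo.add_self_eq_zero _]
  rw [zero_mul]
  exact map_zero _

lemma zmod2_sq (c : ZMod 2) : c ^ 2 = c := by revert c; decide

lemma smul_sq (c : ZMod 2) (v : GaloisField 2 m) : (c • v) ^ 2 = c • v ^ 2 := by
  rw [smul_pow, zmod2_sq]

lemma fld_sq (z : Fin m → ZMod 2) :
    (fld ξ z) ^ 2 = ∑ j : Fin m, z j • (ξ ^ (j : ℕ)) ^ 2 := by
  unfold fld
  rw [sum_pow_char]
  exact Finset.sum_congr rfl fun j _ => smul_sq _ _

lemma row_sum (z : Fin m → ZMod 2) (i : Fin m) :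
    (∑ j, Pmat ξ 1 a i j * z j)
      = tr ((ξ ^ (i : ℕ) * (fld ξ z) ^ 2 + (ξ ^ (i : ℕ)) ^ 2 * fld ξ z) * a) := by
  have key : ∀ j : Fin m, Pmat ξ 1 a i j * z j
      = tr (z j • ((ξ ^ (i : ℕ) * (ξ ^ (j : ℕ)) ^ 2 + (ξ ^ (i : ℕ)) ^ 2 * ξ ^ (j : ℕ)) * a)) := by
    intro j
    rw [Pmat1_apply]
    unfold tr
    rw [map_smul]
    simp [smul_eq_mul, mul_comm]
  rw [Finset.sum_congr rfl fun j _ => key j]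
  unfold tr
  rw [← map_sum]
  congr 1
  calc ∑ j, z j • ((ξ ^ (i : ℕ) * (ξ ^ (j : ℕ)) ^ 2 + (ξ ^ (i : ℕ)) ^ 2 * ξ ^ (j : ℕ)) * a)
      = (∑ j, z j • (ξ ^ (i : ℕ) * (ξ ^ (j : ℕ)) ^ 2 + (ξ ^ (i : ℕ)) ^ 2 * ξ ^ (j : ℕ))) * a := by
        rw [Finset.sum_mul]
        exact Finset.sum_congr rfl fun j _ => (smul_mul_assoc _ _ _).symm
    _ = _ := by
        congr 1
        simp only [smul_add]
        rw [Finset.sum_add_distrib]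
        congr 1
        · rw [Finset.sum_congr rfl fun j _ => (mul_smul_comm (z j) (ξ ^ (i:ℕ)) ((ξ ^ (j:ℕ)) ^ 2)).symm,
            ← Finset.mul_sum, fld_sq]
        · rw [Finset.sum_congr rfl fun j _ =>
              (mul_smul_comm (z j) ((ξ ^ (i:ℕ)) ^ 2) (ξ ^ (j:ℕ))).symm,
            ← Finset.mul_sum]
          rfl

/-- the linear form `x ↦ tr((x w² + x² w) a)`. -/
def Lform (w : GaloisField 2 m) : GaloisField 2 m →ₗ[ZMod 2] ZMod 2 where
  toFun x := tr ((x * w ^ 2 + x ^ 2 * w) * a)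
  map_add' x y := by
    show tr (((x + y) * w ^ 2 + (x + y) ^ 2 * w) * a)
      = tr ((x * w ^ 2 + x ^ 2 * w) * a) + tr ((y * w ^ 2 + y ^ 2 * w) * a)
    have h2 : (x + y) ^ 2 = x ^ 2 + y ^ 2 := add_pow_char _ _ _
    rw [h2]
    unfold tr
    rw [← map_add]
    congr 1
    ring
  map_smul' c x := by
    show tr ((c • x * w ^ 2 + (c • x) ^ 2 * w) * a) = (RingHom.id (ZMod 2)) c • tr ((x * w ^ 2 + x ^ 2 * w) * a)
    have h2 : (c • x) ^ 2 = c • x ^ 2 := smul_sq c x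
    rw [h2]
    unfold tr
    simp only [RingHom.id_apply]
    rw [← map_smul]
    congr 1
    simp only [smul_mul_assoc, ← smul_add]

include hξ hm in
lemma all_x (w : GaloisField 2 m)
    (h : ∀ i : Fin m, tr ((ξ ^ (i : ℕ) * w ^ 2 + (ξ ^ (i : ℕ)) ^ 2 * w) * a) = 0) :
    ∀ x : GaloisField 2 m, tr ((x * w ^ 2 + x ^ 2 * w) * a) = 0 := by
  have hm0 : m ≠ 0 := by rintro rfl; exact absurd (Nat.odd_iff.mp hm) (by norm_num)
  have hcard : Fintype.card (Fin m) = Module.finrank (ZMod 2) (GaloisField 2 m) := by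
    rw [Fintype.card_fin, GaloisField.finrank (p := 2) hm0]
  haveI : Nonempty (Fin m) := Fin.pos_iff_nonempty.mp (Nat.pos_of_ne_zero hm0)
  let B := basisOfLinearIndependentOfCardEqFinrank hξ hcard
  have hB : ∀ i, B i = ξ ^ (i : ℕ) := fun i =>
    congrFun (coe_basisOfLinearIndependentOfCardEqFinrank hξ hcard) i
  have : Lform a w = 0 := by
    apply B.ext
    intro i
    rw [hB i]
    exact h i
  intro x
  exact congrFun (congrArg (fun f => f.toFun) this) x

include ha in
lemma cond_iff (w : GaloisField 2 m)
    (h : ∀ x : GaloisField 2 m, tr ((x * w ^ 2 + x ^ 2 * w) * a) = 0) :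
    w = 0 ∨ w ^ 3 * a = 1 := by
  obtain ⟨e, he⟩ := sqrt_exists (w * a)
  have key : ∀ x, tr ((w ^ 2 * a + e) * x) = 0 := by
    intro x
    have hx := h x
    have split : tr ((x * w ^ 2 + x ^ 2 * w) * a)
        = tr (x * (w ^ 2 * a)) + tr (x ^ 2 * (w * a)) := by
      unfold tr
      rw [← map_add]
      congr 1
      ring
    have hsq : tr (x ^ 2 * (w * a)) = tr (x * e) := by
      rw [← he, show x ^ 2 * e ^ 2 = (x * e) ^ 2 by ring, tr_sq]
    rw [split, hsq] at hx
    calc tr ((w ^ 2 * a + e) * x) = tr (x * (w ^ 2 * a) + x * e) := by congr 1; ring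
    _ = tr (x * (w ^ 2 * a)) + tr (x * e) := by unfold tr; rw [map_add]
    _ = 0 := hx
  have he2 : w ^ 2 * a + e = 0 := tr_nondeg key
  have hee : e = w ^ 2 * a := by
    have := congrArg (· + e) he2
    simpa [add_assoc, CharTwo.add_self_eq_zero] using this.symm
  rw [hee] at he
  -- (w^2 a)^2 = w a
  by_cases hw : w = 0
  · exact Or.inl hw
  right
  have hwa : w * a ≠ 0 := mul_ne_zero hw ha
  have : (w * a) * (w ^ 3 * a) = (w * a) * 1 := by
    rw [mul_one]
    conv_rhs => rw [← he]
    ring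
  exact mul_left_cancel₀ hwa this

lemma cond_iff' (w : GaloisField 2 m) (h : w = 0 ∨ w ^ 3 * a = 1) :
    ∀ x : GaloisField 2 m, tr ((x * w ^ 2 + x ^ 2 * w) * a) = 0 := by
  intro x
  rcases h with rfl | h3
  · simp [tr]
  · have hsq : (w ^ 2 * a) ^ 2 = w * a := by
      calc (w ^ 2 * a) ^ 2 = (w * a) * (w ^ 3 * a) := by ring
      _ = w * a := by rw [h3, mul_one]
    have : tr (x ^ 2 * (w * a)) = tr (x * (w ^ 2 * a)) := by
      rw [← hsq, show x ^ 2 * (w ^ 2 * a) ^ 2 = (x * (w ^ 2 * a)) ^ 2 by ring, tr_sq]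
    calc tr ((x * w ^ 2 + x ^ 2 * w) * a)
        = tr (x * (w ^ 2 * a)) + tr (x ^ 2 * (w * a)) := by
          unfold tr; rw [← map_add]; congr 1; ring
      _ = 0 := by rw [this, CharTwo.add_self_eq_zero]

include hm in
lemma cube_coprime : Nat.Coprime (Nat.card (GaloisField 2 m)ˣ) 3 := by
  have hm0 : m ≠ 0 := by rintro rfl; exact absurd (Nat.odd_iff.mp hm) (by norm_num)
  have hcardU : Nat.card (GaloisField 2 m)ˣ = 2 ^ m - 1 := by
    rw [Nat.card_units, GaloisField.card 2 m hm0]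
  obtain ⟨k, hk⟩ := hm
  have h4 : 4 ^ k % 3 = 1 := by
    rw [Nat.pow_mod]; norm_num
  have h2m : 2 ^ m % 3 = 2 := by
    have : 2 ^ m = 4 ^ k * 2 := by
      rw [hk, pow_add, pow_mul]; norm_num
    rw [this, Nat.mul_mod, h4]
  have hge : 1 ≤ 2 ^ m := Nat.one_le_two_pow
  have hnd : ¬ (3 ∣ 2 ^ m - 1) := by omega
  rw [hcardU]
  exact Nat.coprime_comm.mp ((Nat.prime_three.coprime_iff_not_dvd).mpr hnd)

include hm ha in
lemma cube_root : ∃ w₀ : GaloisField 2 m, w₀ ≠ 0 ∧ w₀ ^ 3 * a = 1 ∧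
    ∀ w, w ^ 3 * a = 1 → w = w₀ := by
  have hcop := cube_coprime (m := m) hm
  set ua : (GaloisField 2 m)ˣ := Units.mk0 a ha with hua
  let u : (GaloisField 2 m)ˣ := (powCoprime hcop).symm ua⁻¹
  have hu3 : u ^ 3 = ua⁻¹ := (powCoprime hcop).apply_symm_apply ua⁻¹
  refine ⟨(u : GaloisField 2 m), Units.ne_zero u, ?_, ?_⟩
  · have : ((u ^ 3 * ua : (GaloisField 2 m)ˣ) : GaloisField 2 m) = 1 := by
      rw [hu3, inv_mul_cancel]; rfl
    simpa [Units.val_pow_eq_pow_val, hua] using this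
  · intro w hw
    have hwne : w ≠ 0 := by
      rintro rfl
      rw [zero_pow (by norm_num), zero_mul] at hw
      exact zero_ne_one hw
    have h3 : (Units.mk0 w hwne) ^ 3 = ua⁻¹ := by
      ext
      have hwi : w ^ 3 = a⁻¹ := eq_inv_of_mul_eq_one_left hw
      simpa [Units.val_pow_eq_pow_val, hua] using hwi
    have := (powCoprime hcop).injective (a₁ := Units.mk0 w hwne) (a₂ := u) ?_
    · exact congrArg Units.val this
    · show (Units.mk0 w hwne) ^ 3 = u ^ 3
      rw [h3, hu3]

include hm hξ ha in
lemma kernel_eq : ∃ v₀ : Fin m → ZMod 2, v₀ ≠ 0 ∧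
    Finset.univ.filter
      (fun z : Fin m → ZMod 2 => ∀ i, ∑ j, Pmat ξ 1 a i j * z j = 0) = {0, v₀} := by
  classical
  have hm0 : m ≠ 0 := by rintro rfl; exact absurd (Nat.odd_iff.mp hm) (by norm_num)
  have hcard : Fintype.card (Fin m) = Module.finrank (ZMod 2) (GaloisField 2 m) := by
    rw [Fintype.card_fin, GaloisField.finrank (p := 2) hm0]
  haveI : Nonempty (Fin m) := Fin.pos_iff_nonempty.mp (Nat.pos_of_ne_zero hm0)
  let B := basisOfLinearIndependentOfCardEqFinrank hξ hcard
  have hB : ∀ i, B i = ξ ^ (i : ℕ) := fun i =>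
    congrFun (coe_basisOfLinearIndependentOfCardEqFinrank hξ hcard) i
  have hfld : ∀ z, fld ξ z = B.equivFun.symm z := by
    intro z
    rw [Module.Basis.equivFun_symm_apply]
    exact Finset.sum_congr rfl fun j _ => by rw [hB j]
  have hinj : Function.Injective (fld ξ) := by
    intro z z' h
    rw [hfld, hfld] at h
    exact B.equivFun.symm.injective h
  obtain ⟨w₀, hw0ne, hw03, hwuniq⟩ := cube_root hm a ha
  refine ⟨B.equivFun w₀, ?_, ?_⟩
  · intro h0
    apply hw0ne
    have : fld ξ (B.equivFun w₀) = w₀ := by rw [hfld]; exact B.equivFun.symm_apply_apply w₀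
    rw [h0] at this
    rw [← this]
    simp [fld]
  · ext z
    simp only [Finset.mem_filter, Finset.mem_univ, true_and, Finset.mem_insert,
      Finset.mem_singleton]
    have hv0 : fld ξ (B.equivFun w₀) = w₀ := by rw [hfld]; exact B.equivFun.symm_apply_apply w₀
    constructor
    · intro h
      have h1 : ∀ i : Fin m, tr ((ξ ^ (i:ℕ) * (fld ξ z) ^ 2 + (ξ ^ (i:ℕ)) ^ 2 * fld ξ z) * a) = 0 :=
        fun i => by rw [← row_sum ξ a z i]; exact h i
      have h2 := all_x hm ξ hξ a (fld ξ z) h1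
      rcases cond_iff a ha (fld ξ z) h2 with h0 | h3
      · left
        apply hinj
        rw [h0]; simp [fld]
      · right
        apply hinj
        rw [hv0]
        exact hwuniq _ h3
    · intro h i
      rw [row_sum ξ a z i]
      have hcnd : fld ξ z = 0 ∨ (fld ξ z) ^ 3 * a = 1 := by
        rcases h with rfl | rfl
        · left; simp [fld]
        · right; rw [hv0]; exact hw03
      exact cond_iff' a (fld ξ z) hcnd (ξ ^ (i:ℕ))

end Main


lemma count_weight (hm : Odd m) (hs : P.IsSymm) (hd : ∀ i, P i i = 0)
    (h : (∑ x, zeta (qform P x)) ^ 2 = 0 ∨ (∑ x, zeta (qform P x)) ^ 2 = 2 ^ (m + 1)) :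
    {x : Fin m → ZMod 2 | qform P x = 2}.ncard ∈
      ({2 ^ (m - 1) - 2 ^ ((m - 1) / 2), 2 ^ (m - 1),
        2 ^ (m - 1) + 2 ^ ((m - 1) / 2)} : Set ℕ) := by
  classical
  obtain ⟨k, hk⟩ := hm
  set N := Finset.univ.filter (fun x : Fin m → ZMod 2 => qform P x = 2) with hN
  have hset : {x : Fin m → ZMod 2 | qform P x = 2} = ↑N := by
    ext x; simp [hN]
  rw [hset, Set.ncard_coe_finset]
  have hcard_univ : (Finset.univ : Finset (Fin m → ZMod 2)).card = 2 ^ m := by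
    rw [Finset.card_univ, Fintype.card_fun]
    simp
  have hsplit : N.card + (Finset.univ.filter (fun x : Fin m → ZMod 2 => ¬ qform P x = 2)).card
      = 2 ^ m := by
    rw [← hcard_univ, hN]
    exact Finset.card_filter_add_card_filter_not _
  have hS : (∑ x, zeta (qform P x)) = (((2:ℤ) ^ m - 2 * N.card : ℤ) : ℂ) := by
    have hterm : ∀ x : Fin m → ZMod 2,
        zeta (qform P x) = (if qform P x = 2 then (-1 : ℂ) else 1) := by
      intro x
      rcases qform_zero_or_two P hs hd x with h0 | h2
      · rw [h0, if_neg (by decide : ¬ (0 : ZMod 4) = 2), zeta_zero]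
      · rw [h2, if_pos rfl, zeta_two]
    rw [Finset.sum_congr rfl fun x _ => hterm x, Finset.sum_ite, Finset.sum_const,
      Finset.sum_const]
    have hc2 : (Finset.univ.filter (fun x : Fin m → ZMod 2 => ¬ qform P x = 2)).card
        = 2 ^ m - N.card := by omega
    rw [hc2]
    have hle : N.card ≤ 2 ^ m := by omega
    rw [nsmul_eq_mul, nsmul_eq_mul, Nat.cast_sub hle]
    push_cast
    ring
  have hle : N.card ≤ 2 ^ m := by omega
  have hpow : (2:ℤ) ^ m = 2 * 2 ^ (m - 1) := by
    conv_lhs => rw [show m = (m - 1) + 1 by omega]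
    rw [pow_succ']
  simp only [Set.mem_insert_iff, Set.mem_singleton_iff]
  rcases h with h0 | h2
  · rw [hS] at h0
    have ht : ((2:ℤ) ^ m - 2 * N.card) = 0 := by
      have := sq_eq_zero_iff.mp h0
      exact_mod_cast this
    have : (N.card : ℤ) = 2 ^ (m - 1) := by linarith
    right; left; exact_mod_cast this
  · rw [hS] at h2
    have ht : ((2:ℤ) ^ m - 2 * N.card) ^ 2 = 2 ^ (m + 1) := by exact_mod_cast h2
    have hkm : (m - 1) / 2 = k := by omega
    have h2m1 : (2:ℤ) ^ (m + 1) = (2 ^ (k + 1)) ^ 2 := by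
      rw [← pow_mul]; congr 1; omega
    have hfac : (((2:ℤ) ^ m - 2 * N.card) - 2 ^ (k + 1))
        * (((2:ℤ) ^ m - 2 * N.card) + 2 ^ (k + 1)) = 0 := by
      have hsq : ((2:ℤ) ^ m - 2 * N.card) ^ 2 = (2 ^ (k + 1)) ^ 2 := by rw [ht, h2m1]
      linear_combination hsq
    have hpk : (2:ℤ) ^ (k + 1) = 2 * 2 ^ k := by rw [pow_succ']
    rcases mul_eq_zero.mp hfac with hc | hc
    · have hNc : (N.card : ℤ) = 2 ^ (m - 1) - 2 ^ k := by linarith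
      left
      rw [hkm]
      have hle2 : (2:ℕ) ^ k ≤ 2 ^ (m - 1) := Nat.pow_le_pow_right (by norm_num) (by omega)
      have : (N.card : ℤ) = ((2 ^ (m - 1) - 2 ^ k : ℕ) : ℤ) := by
        rw [hNc, Nat.cast_sub hle2]; push_cast; ring
      exact_mod_cast this
    · right; right
      rw [hkm]
      have hNc : (N.card : ℤ) = 2 ^ (m - 1) + 2 ^ k := by linarith
      exact_mod_cast hNc



/-- For odd `m` and nonzero `a ∈ GF(2^m)`, the weight
`w_a = #{x ∈ 𝔽₂^m : x P¹(a) xᵀ ≡ 2 (mod 4)}` lies in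
`{2^{m-1} − 2^{(m-1)/2}, 2^{m-1}, 2^{m-1} + 2^{(m-1)/2}}`; equivalently the character
sum `S_a = ∑_x i^{x P¹(a) xᵀ}` satisfies `S_a² ∈ {0, 2^{m+1}}`. -/
theorem dg01_codeword_weights
    (m : ℕ) (hm : Odd m)
    (ξ : GaloisField 2 m)
    (hξ : LinearIndependent (ZMod 2) fun j : Fin m => ξ ^ (j : ℕ))
    (a : GaloisField 2 m) (ha : a ≠ 0) :
    ({x : Fin m → ZMod 2 | qform (Pmat ξ 1 a) x = 2}.ncard ∈
        ({2 ^ (m - 1) - 2 ^ ((m - 1) / 2), 2 ^ (m - 1),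
          2 ^ (m - 1) + 2 ^ ((m - 1) / 2)} : Set ℕ)) ∧
      (∑ x : Fin m → ZMod 2, zeta (qform (Pmat ξ 1 a) x)) ^ 2 ∈
        ({0, 2 ^ (m + 1)} : Set ℂ) := by
  classical
  set P := Pmat ξ 1 a with hP
  have hs := Pmat1_symm ξ a
  have hd := Pmat1_diag ξ a
  obtain ⟨v₀, hv0ne, hK⟩ := kernel_eq hm ξ hξ a ha
  have hq0 : qform P 0 = 0 := by
    unfold qform
    refine Finset.sum_eq_zero fun i _ => Finset.sum_eq_zero fun j _ => ?_
    simp [lift2_zero]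
  have hsum : (∑ x, zeta (qform P x)) ^ 2 = 2 ^ m * (1 + zeta (qform P v₀)) := by
    rw [Ssq P hs hd, hK, Finset.sum_pair (Ne.symm hv0ne), hq0, zeta_zero]
  have halt : (∑ x, zeta (qform P x)) ^ 2 = 0 ∨
      (∑ x, zeta (qform P x)) ^ 2 = 2 ^ (m + 1) := by
    rcases qform_zero_or_two P hs hd v₀ with h | h
    · right
      rw [hsum, h, zeta_zero, pow_succ]
      norm_num
    · left
      rw [hsum, h, zeta_two]
      norm_num
  refine ⟨count_weight P hm hs hd halt, ?_⟩
  simp only [Set.mem_insert_iff, Set.mem_singleton_iff]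
  exact halt
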